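/- Let $n\geq 3$ and let $\mathcal{L}_S$ be the $n\times n$ matrix with diagonal $\frac{4}{3}$, super/sub-diagonal $-\frac{1}{3}$, and corner entries $+\frac{1}{3}$ at $(1,n),(n,1)$. Then the sum of all $(n-1)\times(n-1)$ principal minors of $\mathcal{L}_S$ equals $\frac{n}{2\sqrt{3}}\cdot\frac{(2+\sqrt{3})^{n}-(2-\sqrt{3})^{n}}{3^{n-1}}$. -/

import Mathlib

/-- The matrix `𝓛_S`: diagonal `4/3`, subdiagonal and superdiagonal `-1/3`,
corner entries `+1/3` at positions `(1,n)` and `(n,1)`. -/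
noncomputable def LSnorm (n : ℕ) : Matrix (Fin n) (Fin n) ℝ :=
  Matrix.of fun i j =>
    if i = j then 4 / 3
    else if i.val + 1 = j.val ∨ j.val + 1 = i.val then -(1 / 3)
    else if (i.val = 0 ∧ j.val = n - 1) ∨ (i.val = n - 1 ∧ j.val = 0) then 1 / 3
    else 0

/-- Tridiagonal path matrix: diagonal `4/3`, off-diagonals `-1/3`. -/
noncomputable def Tmat (k : ℕ) : Matrix (Fin k) (Fin k) ℝ :=
  Matrix.of fun i j =>
    if (i : ℕ) = j then 4 / 3
    else if i.val + 1 = j.val ∨ j.val + 1 = i.val then -(1 / 3) else 0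

lemma val_succAbove {n : ℕ} (p : Fin (n + 1)) (x : Fin n) :
    (p.succAbove x).val = if x.val < p.val then x.val else x.val + 1 := by
  unfold Fin.succAbove
  split_ifs with h h' h' <;>
    simp_all [Fin.lt_def, Fin.coe_castSucc, Fin.val_succ] <;> omega

lemma Tmat_sub (k : ℕ) : (Tmat (k + 1)).submatrix Fin.succ Fin.succ = Tmat k := by
  ext i j
  simp only [Tmat, Matrix.submatrix_apply, Matrix.of_apply, Fin.val_succ]
  split_ifs <;> first | rfl | (exfalso; omega)

lemma Tmat_det_rec (k : ℕ) :
    (Tmat (k + 2)).det = 4 / 3 * (Tmat (k + 1)).det - 1 / 9 * (Tmat k).det := by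
  rw [show (k + 2) = (k + 1) + 1 from rfl] at *
  rw [Matrix.det_succ_row_zero, Fin.sum_univ_succ, Fin.sum_univ_succ]
  have h00 : Tmat (k + 1 + 1) 0 0 = 4 / 3 := by simp [Tmat]
  have h01 : Tmat (k + 1 + 1) 0 ((0 : Fin (k + 1)).succ) = -(1 / 3) := by
    simp [Tmat]
  have hrest : ∀ j : Fin k,
      Tmat (k + 1 + 1) 0 ((j.succ : Fin (k + 1)).succ) = 0 := by
    intro j
    simp only [Tmat, Matrix.of_apply, Fin.val_succ, Fin.val_zero]
    split_ifs <;> first | rfl | (exfalso; omega) | (simp_all; done) | (simp_all; omega)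
  have hsub0 :
      ((Tmat (k + 1 + 1)).submatrix Fin.succ (Fin.succAbove 0)).det
        = (Tmat (k + 1)).det := by
    rw [Fin.succAbove_zero, Tmat_sub]
  -- the j = 1 minor
  have hsub1 :
      ((Tmat (k + 1 + 1)).submatrix Fin.succ
          (Fin.succAbove ((0 : Fin (k + 1)).succ))).det
        = -(1 / 3) * (Tmat k).det := by
    rw [Matrix.det_succ_column_zero, Fin.sum_univ_succ]
    have hcol : (((0 : Fin (k + 1)).succ).succAbove (0 : Fin (k + 1))).val = 0 := by
      rw [val_succAbove]
      simp
    have hB00 :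
        ((Tmat (k + 1 + 1)).submatrix Fin.succ
            (Fin.succAbove ((0 : Fin (k + 1)).succ))) 0 0 = -(1 / 3) := by
      simp only [Matrix.submatrix_apply, Tmat, Matrix.of_apply, Fin.val_succ,
        Fin.val_zero, hcol]
      split_ifs <;> first | (exfalso; omega) | (norm_num; done) | (simp_all; done)
    have hBrest : ∀ i : Fin k,
        ((Tmat (k + 1 + 1)).submatrix Fin.succ
            (Fin.succAbove ((0 : Fin (k + 1)).succ))) i.succ 0 = 0 := by
      intro i
      simp only [Matrix.submatrix_apply, Tmat, Matrix.of_apply, Fin.val_succ,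
        Fin.val_zero, hcol]
      split_ifs <;> first | (exfalso; omega) | (norm_num; done) | (simp_all; done)
    have hBsub :
        (((Tmat (k + 1 + 1)).submatrix Fin.succ
            (Fin.succAbove ((0 : Fin (k + 1)).succ))).submatrix
              (Fin.succAbove 0) Fin.succ) = Tmat k := by
      ext a b
      simp only [Matrix.submatrix_apply, Tmat, Matrix.of_apply, Fin.val_succ,
        val_succAbove, Fin.val_zero, Fin.succAbove_zero]
      split_ifs <;> first | rfl | (exfalso; omega) | (simp only [Nat.add_lt_add_iff_right, Nat.not_lt_zero, if_false]; split_ifs <;> first | rfl | (exfalso; omega))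
    rw [hB00, hBsub]
    have : ∀ i : Fin k,
        (-1 : ℝ) ^ ((i.succ : Fin (k+1)) : ℕ) *
          ((Tmat (k + 1 + 1)).submatrix Fin.succ
            (Fin.succAbove ((0 : Fin (k + 1)).succ))) i.succ 0 *
          (((Tmat (k + 1 + 1)).submatrix Fin.succ
            (Fin.succAbove ((0 : Fin (k + 1)).succ))).submatrix
              i.succ.succAbove Fin.succ).det = 0 := by
      intro i
      rw [hBrest i]; ring
    rw [Finset.sum_congr rfl (fun i _ => this i), Finset.sum_const]
    simp
  rw [h00, hsub0, h01, hsub1]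
  have : ∀ j : Fin k,
      (-1 : ℝ) ^ (((j.succ : Fin (k+1)).succ : Fin (k+1+1)) : ℕ) *
        Tmat (k + 1 + 1) 0 ((j.succ : Fin (k + 1)).succ) *
        ((Tmat (k + 1 + 1)).submatrix Fin.succ
          (Fin.succAbove ((j.succ : Fin (k + 1)).succ))).det = 0 := by
    intro j
    rw [hrest j]; ring
  rw [Finset.sum_congr rfl (fun j _ => this j), Finset.sum_const]
  simp
  ring

/-- Closed form for the tridiagonal determinant. -/
lemma Tmat_det_closed (k : ℕ) :
    (Tmat k).det =
      ((2 + Real.sqrt 3) ^ (k + 1) - (2 - Real.sqrt 3) ^ (k + 1)) /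
        (2 * Real.sqrt 3 * 3 ^ k) := by
  have hs0 : Real.sqrt 3 ≠ 0 := by positivity
  have h3 : Real.sqrt 3 * Real.sqrt 3 = 3 := Real.mul_self_sqrt (by norm_num)
  induction k using Nat.twoStepInduction with
  | zero =>
    rw [Matrix.det_fin_zero]
    rw [pow_one, pow_one, pow_zero]
    field_simp
    ring
  | one =>
    rw [Matrix.det_fin_one]
    have : Tmat 1 0 0 = 4 / 3 := by simp [Tmat]
    rw [this]
    field_simp
    ring
  | more k ih1 ih2 =>
    rw [Tmat_det_rec, ih1, ih2]
    have e1 : (2 + Real.sqrt 3) ^ (k + 2 + 1)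
        = 4 * (2 + Real.sqrt 3) ^ (k + 1 + 1) - (2 + Real.sqrt 3) ^ (k + 1) := by
      have h2 : (2 + Real.sqrt 3) ^ 2 = 4 * (2 + Real.sqrt 3) - 1 := by
        nlinarith [h3]
      calc (2 + Real.sqrt 3) ^ (k + 2 + 1)
          = (2 + Real.sqrt 3) ^ (k + 1) * (2 + Real.sqrt 3) ^ 2 := by ring
        _ = (2 + Real.sqrt 3) ^ (k + 1) * (4 * (2 + Real.sqrt 3) - 1) := by rw [h2]
        _ = 4 * (2 + Real.sqrt 3) ^ (k + 1 + 1) - (2 + Real.sqrt 3) ^ (k + 1) := by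
            ring
    have e2 : (2 - Real.sqrt 3) ^ (k + 2 + 1)
        = 4 * (2 - Real.sqrt 3) ^ (k + 1 + 1) - (2 - Real.sqrt 3) ^ (k + 1) := by
      have h2 : (2 - Real.sqrt 3) ^ 2 = 4 * (2 - Real.sqrt 3) - 1 := by
        nlinarith [h3]
      calc (2 - Real.sqrt 3) ^ (k + 2 + 1)
          = (2 - Real.sqrt 3) ^ (k + 1) * (2 - Real.sqrt 3) ^ 2 := by ring
        _ = (2 - Real.sqrt 3) ^ (k + 1) * (4 * (2 - Real.sqrt 3) - 1) := by rw [h2]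
        _ = 4 * (2 - Real.sqrt 3) ^ (k + 1 + 1) - (2 - Real.sqrt 3) ^ (k + 1) := by
            ring
    rw [e1, e2]
    have h3k : (3 : ℝ) ^ k ≠ 0 := by positivity
    field_simp
    ring

/-- Entrywise gauge identity at the level of natural-number indices. -/
lemma key_entry (M ival a b : ℕ) (him : ival ≤ M) (ha : a ≤ M) (ha' : a ≠ ival)
    (hb : b ≤ M) (hb' : b ≠ ival) :
    (if a = b then (4 : ℝ) / 3
      else if a + 1 = b ∨ b + 1 = a then -(1 / 3)
      else if (a = 0 ∧ b = M + 1 - 1) ∨ (a = M + 1 - 1 ∧ b = 0) then 1 / 3 else 0)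
    = (if a < ival then (-1 : ℝ) else 1) *
      (if (if ival < a then a - ival - 1 else a + M - ival)
          = (if ival < b then b - ival - 1 else b + M - ival) then (4 : ℝ) / 3
        else if (if ival < a then a - ival - 1 else a + M - ival) + 1
              = (if ival < b then b - ival - 1 else b + M - ival)
            ∨ (if ival < b then b - ival - 1 else b + M - ival) + 1
              = (if ival < a then a - ival - 1 else a + M - ival) then -(1 / 3)
        else 0) *
      (if b < ival then (-1 : ℝ) else 1) := by
  split_ifs <;> first | (exfalso; omega) | (norm_num; done) | (simp_all; done)

/-- Each principal minor of `LSnorm` equals the tridiagonal determinant. -/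
lemma minor_eq_Tmat (m : ℕ) (i : Fin (m + 1)) :
    ((LSnorm (m + 1)).submatrix i.succAbove i.succAbove).det = (Tmat m).det := by
  classical
  have hfact : ∀ j : Fin m,
      (i.succAbove j).val ≤ m ∧ (i.succAbove j).val ≠ i.val := by
    intro j
    refine ⟨Nat.lt_succ_iff.mp (i.succAbove j).isLt, ?_⟩
    intro h
    exact Fin.succAbove_ne i j (Fin.ext h)
  have him : i.val ≤ m := Nat.lt_succ_iff.mp i.isLt
  set s : Fin m → ℝ := fun j => if (i.succAbove j).val < i.val then -1 else 1
    with hs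
  set σ : Fin m → Fin m := fun j =>
    ⟨if i.val < (i.succAbove j).val then (i.succAbove j).val - i.val - 1
      else (i.succAbove j).val + m - i.val, by
        have h := hfact j
        split_ifs <;> omega⟩ with hσ
  have hinj : Function.Injective σ := by
    intro j k h
    have hj := hfact j
    have hk := hfact k
    have hval : (i.succAbove j).val = (i.succAbove k).val := by
      have h' := congrArg Fin.val h
      simp only [hσ] at h'
      split_ifs at h' <;> omega
    exact Fin.succAbove_right_injective (Fin.ext hval)
  let e : Fin m ≃ Fin m := Equiv.ofBijective σ (Finite.injective_iff_bijective.mp hinj)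
  have hM : (LSnorm (m + 1)).submatrix i.succAbove i.succAbove
      = Matrix.diagonal s * ((Tmat m).submatrix e e) * Matrix.diagonal s := by
    ext j k
    rw [Matrix.mul_diagonal, Matrix.diagonal_mul]
    have he : ∀ x, e x = σ x := fun x => rfl
    simp only [Matrix.submatrix_apply, he, LSnorm, Tmat, Matrix.of_apply, hs, hσ,
      Fin.ext_iff]
    exact key_entry m i.val (i.succAbove j).val (i.succAbove k).val him
      (hfact j).1 (hfact j).2 (hfact k).1 (hfact k).2
  rw [hM, Matrix.det_mul, Matrix.det_mul, Matrix.det_submatrix_equiv_self,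
    Matrix.det_diagonal]
  have hprod : (∏ j, s j) * (∏ j, s j) = 1 := by
    rw [← Finset.prod_mul_distrib]
    apply Finset.prod_eq_one
    intro j _
    simp only [hs]
    split_ifs <;> norm_num
  calc (∏ j, s j) * (Tmat m).det * (∏ j, s j)
      = ((∏ j, s j) * (∏ j, s j)) * (Tmat m).det := by ring
    _ = (Tmat m).det := by rw [hprod, one_mul]

/-- The sum of all `(n-1) × (n-1)` principal minors of `𝓛_S` (here `n = m + 1`). -/
theorem stmt14 (m : ℕ) (hn : 3 ≤ m + 1) :
    ∑ i : Fin (m + 1),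
        ((LSnorm (m + 1)).submatrix i.succAbove i.succAbove).det =
      (m + 1) / (2 * Real.sqrt 3) *
        (((2 + Real.sqrt 3) ^ (m + 1) - (2 - Real.sqrt 3) ^ (m + 1)) / 3 ^ m) := by
  rw [Finset.sum_congr rfl (fun i _ => minor_eq_Tmat m i), Finset.sum_const,
    Finset.card_univ, Fintype.card_fin, nsmul_eq_mul, Tmat_det_closed]
  have hs0 : Real.sqrt 3 ≠ 0 := by positivity
  have h3k : (3 : ℝ) ^ m ≠ 0 := by positivity
  push_cast
  field_simp
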